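/- Let T ∈ 𝔉 be a doubly intermittent full branch map of I = [−1,1], set A = Δ₀^+ = T^{−1}((−1,0)) ∩ I_+, and let B be an interval whose closure is contained in (−1,0) with T(B) ∩ B = ∅. For k ≥ 1 set B'(k) = T_+^{−1}(T_−^{−(k−1)}(B)). Then for every k ≥ 1: A ∩ {r_A > k} ∩ T^{−k}(B) = B'(k); the sets B'(k) are pairwise disjoint intervals contained in A; T^k maps B'(k) bijectively onto B; and the shadow of B in A equals B'_A = ⋃_{k≥1} B'(k). Moreover, for ζ ∈ (−1,0), the points α_k = T_+^{−1}(T_−^{−(k−1)}(ζ)) form a strictly decreasing sequence converging to 0, and α_k is the unique point α ∈ A with T^k(α) = ζ and T^j(α) ∉ A for all 1 ≤ j ≤ k. -/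

import Mathlib

open MeasureTheory Filter Set ProbabilityTheory
open scoped ENNReal Topology ENat

noncomputable section

variable {X : Type*}

/-- The instant of the `i`-th visit (after time `0`) of the orbit of `x` under `T` to `B`,
with the convention that `hitInstant T B x 0 = 0` and the value is `⊤` if there is no
such visit. -/
def hitInstant (T : X → X) (B : Set X) (x : X) : ℕ → ℕ∞
  | 0 => 0
  | (i+1) => sInf {m : ℕ∞ | ∃ n : ℕ, hitInstant T B x i < (n : ℕ∞) ∧ T^[n] x ∈ B ∧ m = (n : ℕ∞)}

/-- The first hitting time `r_B(x) = inf {k ≥ 1 : T^k x ∈ B}` (with value `⊤` if the orbit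
never enters `B`). -/
def hitTime (T : X → X) (B : Set X) (x : X) : ℕ∞ := hitInstant T B x 1

/-- The `i`-th interarrival time (gap between the `i`-th and `(i+1)`-st visits);
`interGap T B 0 x` is the first hitting time `r_B^{(1)}(x)`, and once some
visit fails to occur, all subsequent gaps are `⊤`. -/
def interGap (T : X → X) (B : Set X) (i : ℕ) (x : X) : ℝ≥0∞ :=
  if hitInstant T B x i = ⊤ then ⊤
  else ((hitInstant T B x (i+1) - hitInstant T B x i : ℕ∞) : ℝ≥0∞)

/-- The shadow set `E'_A = ⋃_{k ≥ 0} (A ∩ {r_A > k} ∩ T^{-k} E)` of `E` in `A`. -/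
def shadow (T : X → X) (A E : Set X) : Set X :=
  ⋃ k : ℕ, A ∩ {x | (k : ℕ∞) < hitTime T A x} ∩ (T^[k]) ⁻¹' E

/-- The induced (first-return) map `T_A(x) = T^{r_A(x)}(x)` (junk value `x` if the orbit of
`x` never returns to `A`). -/
def inducedMap (T : X → X) (A : Set X) (x : X) : X :=
  T^[sInf {n : ℕ | 1 ≤ n ∧ T^[n] x ∈ A}] x

/-- The rescaled interarrival process `c · Φ_B : x ↦ (c · r_B^{(i)}(x))_{i ≥ 1}`,
as a random element of `ℕ → ℝ≥0∞`. -/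
def rescaledProcess (T : X → X) (B : Set X) (c : ℝ≥0∞) (x : X) : ℕ → ℝ≥0∞ :=
  fun i => c * interGap T B i x

/-- Convergence in distribution: the laws of the random elements `f n : X → (ℕ → ℝ≥0∞)`
under the measures `P n` converge weakly to `ν` (tested against bounded continuous
real functions, with `ℕ → ℝ≥0∞` carrying the product topology). -/
def ConvInDist [MeasurableSpace X] (P : ℕ → Measure X)
    (f : ℕ → X → (ℕ → ℝ≥0∞)) (ν : Measure (ℕ → ℝ≥0∞)) : Prop :=
  ∀ g : BoundedContinuousFunction (ℕ → ℝ≥0∞) ℝ,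
    Tendsto (fun n => ∫ x, g (f n x) ∂(P n)) atTop (𝓝 (∫ y, g y ∂ν))


end

noncomputable section

open Real

/-- `Δ_n^-`: the sets `Δ_0^- = T^{-1}((0,1)) ∩ I_-` and `Δ_n^- = T^{-1}(Δ_{n-1}^-) ∩ I_-`. -/
def DeltaNeg (T : ℝ → ℝ) : ℕ → Set ℝ
  | 0 => T ⁻¹' (Set.Ioo 0 1) ∩ Set.Icc (-1) 0
  | (n+1) => T ⁻¹' (DeltaNeg T n) ∩ Set.Icc (-1) 0

/-- `Δ_n^+`: the sets `Δ_0^+ = T^{-1}((-1,0)) ∩ I_+` and `Δ_n^+ = T^{-1}(Δ_{n-1}^+) ∩ I_+`. -/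
def DeltaPos (T : ℝ → ℝ) : ℕ → Set ℝ
  | 0 => T ⁻¹' (Set.Ioo (-1) 0) ∩ Set.Icc 0 1
  | (n+1) => T ⁻¹' (DeltaPos T n) ∩ Set.Icc 0 1

/-- `δ_n^- = T^{-1}(Δ_n^+) ∩ Δ_0^-`. -/
def deltaNeg (T : ℝ → ℝ) (n : ℕ) : Set ℝ := T ⁻¹' (DeltaPos T n) ∩ DeltaNeg T 0

/-- `δ_n^+ = T^{-1}(Δ_n^-) ∩ Δ_0^+`. -/
def deltaPos (T : ℝ → ℝ) (n : ℕ) : Set ℝ := T ⁻¹' (DeltaNeg T n) ∩ DeltaPos T 0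

/-- The class `𝔉` of doubly intermittent full branch maps of `I = [-1,1]`:
`T` agrees on `[-1,0)` and `(0,1]` with orientation-preserving `C²` diffeomorphic
branches `Tm : I_- → I`, `Tp : I_+ → I` whose only fixed points are `∓1` (A0), which have
the prescribed local forms near `∓1` and `0∓` with exponents `ℓ₁, ℓ₂ ≥ 0`,
`k₁, k₂, a₁, a₂, b₁, b₂ > 0` (A1), which satisfy the uniform expansion property (A2), and
for which `β = max(k₁ℓ₁, k₂ℓ₂) < 1`. -/
structure DoublyIntermittent (T : ℝ → ℝ) where
  /-- the left branch `T_- : I_- → I` -/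
  Tm : ℝ → ℝ
  /-- the right branch `T_+ : I_+ → I` -/
  Tp : ℝ → ℝ
  l₁ : ℝ
  l₂ : ℝ
  k₁ : ℝ
  k₂ : ℝ
  a₁ : ℝ
  a₂ : ℝ
  b₁ : ℝ
  b₂ : ℝ
  /-- the radius `ι` of the one-sided neighbourhoods `U_{0±}` of `0` -/
  ι : ℝ
  hl₁ : 0 ≤ l₁
  hl₂ : 0 ≤ l₂
  hk₁ : 0 < k₁
  hk₂ : 0 < k₂
  ha₁ : 0 < a₁
  ha₂ : 0 < a₂
  hb₁ : 0 < b₁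
  hb₂ : 0 < b₂
  hι : 0 < ι
  hι1 : ι ≤ 1
  /-- `T` agrees with the left branch on `[-1, 0)` -/
  hTm_eq : ∀ x ∈ Set.Ico (-1 : ℝ) 0, T x = Tm x
  /-- `T` agrees with the right branch on `(0, 1]` -/
  hTp_eq : ∀ x ∈ Set.Ioc (0 : ℝ) 1, T x = Tp x
  hT0 : T 0 = Tm 0 ∨ T 0 = Tp 0
  /-- (A0): the branches are `C²` -/
  hTm_smooth : ContDiffOn ℝ 2 Tm (Set.Icc (-1) 0)
  hTp_smooth : ContDiffOn ℝ 2 Tp (Set.Icc 0 1)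
  /-- (A0): orientation preserving -/
  hTm_mono : StrictMonoOn Tm (Set.Icc (-1) 0)
  hTp_mono : StrictMonoOn Tp (Set.Icc 0 1)
  /-- (A0): diffeomorphisms (nonvanishing one-sided derivatives) -/
  hTm_deriv : ∀ x ∈ Set.Icc (-1 : ℝ) 0, derivWithin Tm (Set.Icc (-1) 0) x ≠ 0
  hTp_deriv : ∀ x ∈ Set.Icc (0 : ℝ) 1, derivWithin Tp (Set.Icc 0 1) x ≠ 0
  /-- (A0): full branches -/
  hTm_image : Tm '' Set.Icc (-1) 0 = Set.Icc (-1) 1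
  hTp_image : Tp '' Set.Icc 0 1 = Set.Icc (-1) 1
  /-- (A0): the only fixed points are the endpoints -/
  hfixm : ∀ x ∈ Set.Icc (-1 : ℝ) 0, (Tm x = x ↔ x = -1)
  hfixp : ∀ x ∈ Set.Icc (0 : ℝ) 1, (Tp x = x ↔ x = 1)
  /-- (A1): form near `0-` (`T x = 1 - a₁|x|^{k₁}` on `U_{0-}`; if `k₁ = 1` only a
  one-sided derivative `a₁ > 1` at `0` is required) -/
  hform0m : (k₁ ≠ 1 ∧ ∀ x ∈ Set.Ioc (-ι) 0, Tm x = 1 - a₁ * |x| ^ k₁)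
      ∨ (k₁ = 1 ∧ 1 < a₁ ∧ HasDerivWithinAt Tm a₁ (Set.Icc (-1) 0) 0)
  /-- (A1): form near `0+` (`T x = -1 + a₂ x^{k₂}` on `U_{0+}`; if `k₂ = 1` only a
  one-sided derivative `a₂ > 1` at `0` is required) -/
  hform0p : (k₂ ≠ 1 ∧ ∀ x ∈ Set.Ico 0 ι, Tp x = -1 + a₂ * x ^ k₂)
      ∨ (k₂ = 1 ∧ 1 < a₂ ∧ HasDerivWithinAt Tp a₂ (Set.Icc 0 1) 0)
  /-- (A1): form near `-1` on `U_{-1} = T(U_{0+})`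
  (`T x = x + b₁ (1+x)^{1+ℓ₁}`; if `ℓ₁ = 0`, affine of slope `1 + b₁` up to a
  `C²` correction) -/
  hformm1 : (l₁ ≠ 0 ∧ ∀ x ∈ Tp '' Set.Ico 0 ι, Tm x = x + b₁ * (1 + x) ^ (1 + l₁))
      ∨ (l₁ = 0 ∧ ∃ ξ : ℝ → ℝ, ContDiff ℝ 2 ξ ∧ ξ (-1) = 0 ∧ deriv ξ (-1) = 0 ∧
          ∀ x ∈ Tp '' Set.Ico 0 ι, Tm x = -1 + (1 + b₁) * (x + 1) + ξ x)
  /-- (A1): form near `1` on `U_1 = T(U_{0-})`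
  (`T x = x - b₂ (1-x)^{1+ℓ₂}`; if `ℓ₂ = 0`, affine of slope `1 + b₂` up to a
  `C²` correction) -/
  hform1 : (l₂ ≠ 0 ∧ ∀ x ∈ Tm '' Set.Ioc (-ι) 0, Tp x = x - b₂ * (1 - x) ^ (1 + l₂))
      ∨ (l₂ = 0 ∧ ∃ ξ : ℝ → ℝ, ContDiff ℝ 2 ξ ∧ ξ 1 = 0 ∧ deriv ξ 1 = 0 ∧
          ∀ x ∈ Tm '' Set.Ioc (-ι) 0, Tp x = 1 + (1 + b₂) * (x - 1) + ξ x)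
  /-- (A2): uniform expansion `(T^n)'(x) > λ > 1` on `δ_n^±` for `1 ≤ n ≤ n_±` -/
  hA2 : ∃ Λ : ℝ, 1 < Λ ∧
      (∀ n : ℕ, 1 ≤ n → n ≤ sInf {m : ℕ | deltaNeg T m ⊆ Set.Ioc (-ι) 0} →
        ∀ x ∈ deltaNeg T n, Λ < deriv (T^[n]) x) ∧
      (∀ n : ℕ, 1 ≤ n → n ≤ sInf {m : ℕ | deltaPos T m ⊆ Set.Ico 0 ι} →
        ∀ x ∈ deltaPos T n, Λ < deriv (T^[n]) x)
  /-- `β = max(k₁ℓ₁, k₂ℓ₂) < 1` -/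
  hβ : max (k₁ * l₁) (k₂ * l₂) < 1

end

/-- Iterated preimage under the left branch within `I_- = [-1,0]`:
`T_-^{-k}(S) = (S ↦ T_-^{-1}(S) ∩ I_-)^k (S)`. -/
def TmInvIter (Tm : ℝ → ℝ) (k : ℕ) (S : Set ℝ) : Set ℝ :=
  (fun S => Tm ⁻¹' S ∩ Set.Icc (-1) 0)^[k] S

/-- `B'(k) = T_+^{-1}(T_-^{-(k-1)}(B))` (within `I_+ = [0,1]`). -/
def shadowBranch (Tm Tp : ℝ → ℝ) (k : ℕ) (B : Set ℝ) : Set ℝ :=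
  Tp ⁻¹' (TmInvIter Tm (k - 1) B) ∩ Set.Icc 0 1

section Aux18

open Set Function

set_option linter.unusedSectionVars false

lemma hitTime_lt_iff {X : Type*} (T : X → X) (A : Set X) (x : X) (k : ℕ) :
    (k : ℕ∞) < hitTime T A x ↔ ∀ n : ℕ, 1 ≤ n → n ≤ k → T^[n] x ∉ A := by
  have hS : hitTime T A x
      = sInf {m : ℕ∞ | ∃ n : ℕ, (0:ℕ∞) < (n:ℕ∞) ∧ T^[n] x ∈ A ∧ m = (n:ℕ∞)} := by
    simp [hitTime, hitInstant]
  rw [hS]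
  constructor
  · intro h n hn hnk hmem
    have hmemS : (n:ℕ∞) ∈ {m : ℕ∞ | ∃ n : ℕ, (0:ℕ∞) < (n:ℕ∞) ∧ T^[n] x ∈ A ∧ m = (n:ℕ∞)} :=
      ⟨n, by exact_mod_cast hn, hmem, rfl⟩
    have hle := csInf_le (OrderBot.bddBelow _) hmemS
    have hk : (k:ℕ∞) < (n:ℕ∞) := lt_of_lt_of_le h hle
    have : k < n := by exact_mod_cast hk
    omega
  · intro h
    have h1 : ((k:ℕ∞) + 1) ≤ sInf {m : ℕ∞ | ∃ n : ℕ, (0:ℕ∞) < (n:ℕ∞) ∧ T^[n] x ∈ A ∧ m = (n:ℕ∞)} := by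
      apply le_sInf
      rintro m ⟨n, hn0, hmem, rfl⟩
      have hn1 : 1 ≤ n := by exact_mod_cast hn0
      have : ¬ n ≤ k := fun hle => h n hn1 hle hmem
      have hkn : k + 1 ≤ n := by omega
      exact_mod_cast hkn
    calc (k:ℕ∞) < (k:ℕ∞) + 1 := by
          exact_mod_cast Nat.lt_succ_self k
      _ ≤ _ := h1

namespace DoublyIntermittent

variable {T : ℝ → ℝ} (hT : DoublyIntermittent T)
include hT

lemma tm_contOn : ContinuousOn hT.Tm (Icc (-1) 0) := hT.hTm_smooth.continuousOn
lemma tp_contOn : ContinuousOn hT.Tp (Icc 0 1) := hT.hTp_smooth.continuousOn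

lemma tm_neg_one : hT.Tm (-1) = -1 := (hT.hfixm (-1) ⟨le_rfl, by norm_num⟩).mpr rfl
lemma tp_one : hT.Tp 1 = 1 := (hT.hfixp 1 ⟨by norm_num, le_rfl⟩).mpr rfl

lemma tm_mem {x : ℝ} (hx : x ∈ Icc (-1:ℝ) 0) : hT.Tm x ∈ Icc (-1:ℝ) 1 := by
  rw [← hT.hTm_image]; exact mem_image_of_mem _ hx

lemma tp_mem {x : ℝ} (hx : x ∈ Icc (0:ℝ) 1) : hT.Tp x ∈ Icc (-1:ℝ) 1 := by
  rw [← hT.hTp_image]; exact mem_image_of_mem _ hx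

lemma tm_surj {y : ℝ} (hy : y ∈ Icc (-1:ℝ) 1) : ∃ x ∈ Icc (-1:ℝ) 0, hT.Tm x = y := by
  rw [← hT.hTm_image] at hy; exact hy

lemma tp_surj {y : ℝ} (hy : y ∈ Icc (-1:ℝ) 1) : ∃ x ∈ Icc (0:ℝ) 1, hT.Tp x = y := by
  rw [← hT.hTp_image] at hy; exact hy

lemma tm_zero : hT.Tm 0 = 1 := by
  have h1 : (1:ℝ) ∈ hT.Tm '' Icc (-1) 0 := by
    rw [hT.hTm_image]; exact ⟨by norm_num, le_rfl⟩
  obtain ⟨x, hx, hx1⟩ := h1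
  have h2 := (hT.tm_mem (⟨by norm_num, le_rfl⟩ : (0:ℝ) ∈ Icc (-1:ℝ) 0)).2
  have hle : hT.Tm x ≤ hT.Tm 0 :=
    hT.hTm_mono.monotoneOn hx ⟨by norm_num, le_rfl⟩ hx.2
  linarith

lemma tp_zero : hT.Tp 0 = -1 := by
  have h1 : (-1:ℝ) ∈ hT.Tp '' Icc 0 1 := by
    rw [hT.hTp_image]; exact ⟨le_rfl, by norm_num⟩
  obtain ⟨x, hx, hx1⟩ := h1
  have h2 := (hT.tp_mem (⟨le_rfl, by norm_num⟩ : (0:ℝ) ∈ Icc (0:ℝ) 1)).1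
  have hle : hT.Tp 0 ≤ hT.Tp x :=
    hT.hTp_mono.monotoneOn ⟨le_rfl, by norm_num⟩ hx hx.1
  linarith

lemma tm_gt {x : ℝ} (hx : x ∈ Ioc (-1:ℝ) 0) : x < hT.Tm x := by
  by_contra h
  push_neg at h
  have hc : ContinuousOn (fun y => hT.Tm y - y) (Icc x 0) :=
    (hT.tm_contOn.mono (Icc_subset_Icc hx.1.le le_rfl)).sub continuousOn_id
  have hmem : (0:ℝ) ∈ Icc ((fun y => hT.Tm y - y) x) ((fun y => hT.Tm y - y) 0) := by
    simp only [hT.tm_zero]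
    constructor
    · linarith
    · norm_num
  obtain ⟨c, hc1, hc2⟩ := intermediate_value_Icc hx.2 hc hmem
  have hcI : c ∈ Icc (-1:ℝ) 0 := ⟨le_trans hx.1.le hc1.1, hc1.2⟩
  have : c = -1 := (hT.hfixm c hcI).mp (by simpa [sub_eq_zero] using hc2)
  have : (-1:ℝ) < c := lt_of_lt_of_le hx.1 hc1.1
  linarith [this]

lemma T_eq_tm {x : ℝ} (hx : x ∈ Ico (-1:ℝ) 0) : T x = hT.Tm x := hT.hTm_eq x hx
lemma T_eq_tp {x : ℝ} (hx : x ∈ Ioc (0:ℝ) 1) : T x = hT.Tp x := hT.hTp_eq x hx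

lemma T_neg_one : T (-1) = -1 := by
  rw [hT.T_eq_tm ⟨le_rfl, by norm_num⟩, hT.tm_neg_one]

lemma T_zero : T 0 = 1 ∨ T 0 = -1 := by
  rcases hT.hT0 with h | h
  · left; rw [h, hT.tm_zero]
  · right; rw [h, hT.tp_zero]

lemma mem_A_iff {x : ℝ} : x ∈ DeltaPos T 0 ↔ T x ∈ Ioo (-1:ℝ) 0 ∧ x ∈ Icc (0:ℝ) 1 :=
  Iff.rfl

lemma escape_step {y : ℝ} (hy : y = -1 ∨ y ∈ Icc (0:ℝ) 1) (hyA : y ∉ DeltaPos T 0) :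
    T y = -1 ∨ T y ∈ Icc (0:ℝ) 1 := by
  rcases hy with rfl | hy
  · left; exact hT.T_neg_one
  · rcases eq_or_lt_of_le hy.1 with h0 | h0
    · rcases hT.T_zero with h | h
      · right; rw [← h0, h]; exact ⟨by norm_num, le_rfl⟩
      · left; rw [← h0, h]
    · have hTy : T y = hT.Tp y := hT.T_eq_tp ⟨h0, hy.2⟩
      have hmem : hT.Tp y ∈ Icc (-1:ℝ) 1 := hT.tp_mem hy
      have hnot : T y ∉ Ioo (-1:ℝ) 0 := fun hc => hyA ⟨hc, hy⟩
      have hne : hT.Tp y ≠ -1 := by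
        intro h
        have heq : y = 0 := hT.hTp_mono.injOn hy ⟨le_rfl, by norm_num⟩
          (by rw [h, hT.tp_zero])
        exact absurd heq (ne_of_gt h0)
      right
      rw [hTy]
      refine ⟨?_, hmem.2⟩
      by_contra h'
      push_neg at h'
      exact hnot ⟨by rw [hTy]; exact lt_of_le_of_ne hmem.1 (Ne.symm hne), by rw [hTy]; exact h'⟩

lemma escape_chain {x : ℝ} {j k : ℕ} (hjk : j ≤ k)
    (hj : T^[j] x = -1 ∨ T^[j] x ∈ Icc (0:ℝ) 1)
    (hnot : ∀ m, j ≤ m → m ≤ k → T^[m] x ∉ DeltaPos T 0) :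
    T^[k] x = -1 ∨ T^[k] x ∈ Icc (0:ℝ) 1 := by
  induction k, hjk using Nat.le_induction with
  | base => exact hj
  | succ k hk ih =>
    have h1 := ih (fun m hm hmk => hnot m hm (by omega))
    have h2 := hT.escape_step h1 (hnot k hk (by omega))
    rwa [Function.iterate_succ_apply']

end DoublyIntermittent

lemma tmInvIter_mem_iff (Tm : ℝ → ℝ) (n : ℕ) (S : Set ℝ) (y : ℝ) :
    y ∈ TmInvIter Tm n S ↔
      (∀ j < n, Tm^[j] y ∈ Icc (-1:ℝ) 0) ∧ Tm^[n] y ∈ S := by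
  induction n generalizing S y with
  | zero => simp [TmInvIter]
  | succ n ih =>
    have hrw : TmInvIter Tm (n+1) S = Tm ⁻¹' (TmInvIter Tm n S) ∩ Icc (-1) 0 := by
      simp only [TmInvIter, Function.iterate_succ_apply']
    rw [hrw]
    constructor
    · rintro ⟨hy1, hy2⟩
      obtain ⟨h1, h2⟩ := (ih _ _).mp hy1
      refine ⟨?_, ?_⟩
      · intro j hj
        cases j with
        | zero => simpa using hy2
        | succ j => rw [Function.iterate_succ_apply]; exact h1 j (by omega)
      · rw [Function.iterate_succ_apply]; exact h2
    · rintro ⟨h1, h2⟩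
      refine ⟨(ih _ _).mpr ⟨fun j hj => ?_, ?_⟩, by simpa using h1 0 (by omega)⟩
      · rw [← Function.iterate_succ_apply]; exact h1 (j+1) (by omega)
      · rw [← Function.iterate_succ_apply]; exact h2

lemma shadowBranch_mem_iff (Tm Tp : ℝ → ℝ) (k : ℕ) (B : Set ℝ) (x : ℝ) :
    x ∈ shadowBranch Tm Tp k B ↔ x ∈ Icc (0:ℝ) 1 ∧
      (∀ j < k - 1, Tm^[j] (Tp x) ∈ Icc (-1:ℝ) 0) ∧ Tm^[k-1] (Tp x) ∈ B := by
  simp only [shadowBranch, Set.mem_inter_iff, Set.mem_preimage, tmInvIter_mem_iff]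
  tauto

end Aux18

section Aux18b

open Set Function

set_option linter.unusedSectionVars false

namespace DoublyIntermittent

variable {T : ℝ → ℝ} (hT : DoublyIntermittent T)
include hT

lemma forward {B : Set ℝ} (hB : B ⊆ Ioo (-1:ℝ) 0)
    {k : ℕ} (hk : 1 ≤ k) {x : ℝ} (hx : x ∈ shadowBranch hT.Tm hT.Tp k B) :
    x ∈ Ioo (0:ℝ) 1 ∧ hT.Tp x = T x ∧ T^[k] x ∈ B ∧
    (∀ j, 1 ≤ j → j ≤ k → T^[j] x ∈ Ioo (-1:ℝ) 0 ∧ T^[j] x = hT.Tm^[j-1] (hT.Tp x)) := by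
  rw [shadowBranch_mem_iff] at hx
  obtain ⟨hx01, hmid, hlast⟩ := hx
  have hzi : ∀ i, i ≤ k - 1 → hT.Tm^[k-1-i] (hT.Tp x) ∈ Ioo (-1:ℝ) 0 := by
    intro i
    induction i with
    | zero => intro _; simpa using hB hlast
    | succ i ih =>
      intro hik
      have h2 : hT.Tm^[k-1-i] (hT.Tp x) ∈ Ioo (-1:ℝ) 0 := ih (by omega)
      have hstep : hT.Tm^[k-1-i] (hT.Tp x) = hT.Tm (hT.Tm^[k-1-(i+1)] (hT.Tp x)) := by
        rw [show k - 1 - i = (k - 1 - (i+1)) + 1 by omega, Function.iterate_succ_apply']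
      have hj : hT.Tm^[k-1-(i+1)] (hT.Tp x) ∈ Icc (-1:ℝ) 0 := hmid _ (by omega)
      constructor
      · rcases eq_or_lt_of_le hj.1 with h | h
        · exfalso; rw [hstep, ← h, hT.tm_neg_one] at h2; exact lt_irrefl _ h2.1
        · exact h
      · rcases eq_or_lt_of_le hj.2 with h | h
        · exfalso; rw [hstep, h, hT.tm_zero] at h2; linarith [h2.2]
        · exact h
  have hzall : ∀ j, j ≤ k - 1 → hT.Tm^[j] (hT.Tp x) ∈ Ioo (-1:ℝ) 0 := by
    intro j hj
    have := hzi (k-1-j) (by omega)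
    rwa [show k-1-(k-1-j) = j by omega] at this
  have hz0 : hT.Tp x ∈ Ioo (-1:ℝ) 0 := by simpa using hzall 0 (by omega)
  have hx0 : x ∈ Ioo (0:ℝ) 1 := by
    constructor
    · rcases eq_or_lt_of_le hx01.1 with h | h
      · exfalso; rw [← h, hT.tp_zero] at hz0; exact lt_irrefl _ hz0.1
      · exact h
    · rcases eq_or_lt_of_le hx01.2 with h | h
      · exfalso; rw [h, hT.tp_one] at hz0; linarith [hz0.2]
      · exact h
  have hTeq : T x = hT.Tp x := hT.T_eq_tp ⟨hx0.1, hx01.2⟩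
  have horb : ∀ j, 1 ≤ j → j ≤ k → T^[j] x = hT.Tm^[j-1] (hT.Tp x) := by
    intro j hj
    induction j, hj using Nat.le_induction with
    | base => intro _; simpa using hTeq
    | succ j hj ih =>
      intro hjk
      have hprev := ih (by omega)
      have hmem := hzall (j-1) (by omega)
      rw [Function.iterate_succ_apply', hprev,
        hT.T_eq_tm ⟨hmem.1.le, hmem.2⟩,
        show j + 1 - 1 = (j-1)+1 by omega, Function.iterate_succ_apply']
  refine ⟨hx0, hTeq.symm, ?_, fun j h1 h2 => ⟨?_, horb j h1 h2⟩⟩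
  · rw [horb k hk le_rfl]; exact hlast
  · rw [horb j h1 h2]; exact hzall (j-1) (by omega)

lemma reverse {B : Set ℝ} (hB : B ⊆ Ioo (-1:ℝ) 0) {k : ℕ} (hk : 1 ≤ k) {x : ℝ}
    (hxA : x ∈ DeltaPos T 0)
    (hnot : ∀ j, 1 ≤ j → j ≤ k → T^[j] x ∉ DeltaPos T 0)
    (hxB : T^[k] x ∈ B) :
    x ∈ shadowBranch hT.Tm hT.Tp k B := by
  obtain ⟨hTx, hx01⟩ := hxA
  rw [Set.mem_preimage] at hTx
  have horb : ∀ j, 1 ≤ j → j ≤ k → T^[j] x ∈ Ioo (-1:ℝ) 0 := by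
    intro j hj
    induction j, hj using Nat.le_induction with
    | base => intro _; simpa using hTx
    | succ j hj ih =>
      intro hjk
      have hprev : T^[j] x ∈ Ioo (-1:ℝ) 0 := ih (by omega)
      have hTm : T^[j+1] x = hT.Tm (T^[j] x) := by
        rw [Function.iterate_succ_apply']
        exact hT.T_eq_tm ⟨hprev.1.le, hprev.2⟩
      have hmem : T^[j+1] x ∈ Icc (-1:ℝ) 1 := by
        rw [hTm]; exact hT.tm_mem ⟨hprev.1.le, hprev.2.le⟩
      by_contra hcon
      have hin : T^[j+1] x = -1 ∨ T^[j+1] x ∈ Icc (0:ℝ) 1 := by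
        rcases lt_or_ge (T^[j+1] x) 0 with h | h
        · left; by_contra h'
          exact hcon ⟨lt_of_le_of_ne hmem.1 (Ne.symm h'), h⟩
        · right; exact ⟨h, hmem.2⟩
      have hesc := hT.escape_chain hjk hin (fun m hm hmk => hnot m (by omega) hmk)
      have hBk := hB hxB
      rcases hesc with h | h
      · rw [h] at hBk; exact lt_irrefl _ hBk.1
      · linarith [hBk.2, h.1]
  have hx0 : 0 < x := by
    rcases eq_or_lt_of_le hx01.1 with h | h
    · exfalso
      rcases hT.T_zero with h' | h' <;> rw [← h, h'] at hTx
      · linarith [hTx.2]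
      · exact lt_irrefl _ hTx.1
    · exact h
  have hTeq : T x = hT.Tp x := hT.T_eq_tp ⟨hx0, hx01.2⟩
  have hiter : ∀ j, j + 1 ≤ k → hT.Tm^[j] (hT.Tp x) = T^[j+1] x := by
    intro j
    induction j with
    | zero => intro _; simpa using hTeq.symm
    | succ j ih =>
      intro hjk
      have hprev := ih (by omega)
      have hj1 := horb (j+1) (by omega) (by omega)
      rw [Function.iterate_succ_apply' hT.Tm, hprev,
        Function.iterate_succ_apply' T (j+1) x]
      exact (hT.T_eq_tm ⟨hj1.1.le, hj1.2⟩).symm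
  rw [shadowBranch_mem_iff]
  refine ⟨hx01, fun j hj => ?_, ?_⟩
  · rw [hiter j (by omega)]
    have := horb (j+1) (by omega) (by omega)
    exact ⟨this.1.le, this.2.le⟩
  · rw [hiter (k-1) (by omega), show k - 1 + 1 = k by omega]
    exact hxB

end DoublyIntermittent

end Aux18b

section Aux18c

open Set Function

set_option linter.unusedSectionVars false

lemma ordConnected_pre {f : ℝ → ℝ} {a b : ℝ} (hf : MonotoneOn f (Icc a b)) {S : Set ℝ}
    (hS : S.OrdConnected) : (f ⁻¹' S ∩ Icc a b).OrdConnected := by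
  constructor
  rintro x ⟨hx1, hx2⟩ y ⟨hy1, hy2⟩ z hz
  have hz' : z ∈ Icc a b := ⟨le_trans hx2.1 hz.1, le_trans hz.2 hy2.2⟩
  exact ⟨hS.out hx1 hy1 ⟨hf hx2 hz' hz.1, hf hz' hy2 hz.2⟩, hz'⟩

namespace DoublyIntermittent

variable {T : ℝ → ℝ} (hT : DoublyIntermittent T)
include hT

lemma tmInvIter_ordConnected {B : Set ℝ} (hB : B.OrdConnected) (n : ℕ) :
    (TmInvIter hT.Tm n B).OrdConnected := by
  induction n with
  | zero => simpa [TmInvIter] using hB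
  | succ n ih =>
    have hrw : TmInvIter hT.Tm (n+1) B = hT.Tm ⁻¹' (TmInvIter hT.Tm n B) ∩ Icc (-1) 0 := by
      simp only [TmInvIter, Function.iterate_succ_apply']
    rw [hrw]
    exact ordConnected_pre hT.hTm_mono.monotoneOn ih

lemma shadowBranch_ordConnected {B : Set ℝ} (hB : B.OrdConnected) (k : ℕ) :
    (shadowBranch hT.Tm hT.Tp k B).OrdConnected :=
  ordConnected_pre hT.hTp_mono.monotoneOn (hT.tmInvIter_ordConnected hB (k-1))

lemma tm_iter_injOn : ∀ n {u v : ℝ},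
    (∀ i ≤ n, hT.Tm^[i] u ∈ Icc (-1:ℝ) 0) → (∀ i ≤ n, hT.Tm^[i] v ∈ Icc (-1:ℝ) 0) →
    hT.Tm^[n] u = hT.Tm^[n] v → u = v := by
  intro n
  induction n with
  | zero => intro u v _ _ h; simpa using h
  | succ n ih =>
    intro u v hu hv h
    rw [Function.iterate_succ_apply', Function.iterate_succ_apply'] at h
    have := hT.hTm_mono.injOn (hu n (by omega)) (hv n (by omega)) h
    exact ih (fun i hi => hu i (by omega)) (fun i hi => hv i (by omega)) this

lemma tm_iter_surj : ∀ n, ∀ b ∈ Icc (-1:ℝ) 0, ∃ u ∈ Icc (-1:ℝ) 0,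
    (∀ j ≤ n, hT.Tm^[j] u ∈ Icc (-1:ℝ) 0) ∧ hT.Tm^[n] u = b := by
  intro n
  induction n with
  | zero =>
    intro b hb
    refine ⟨b, hb, fun j hj => ?_, rfl⟩
    interval_cases j
    simpa using hb
  | succ n ih =>
    intro b hb
    obtain ⟨u, hu, hall, hun⟩ := ih b hb
    obtain ⟨z, hz, hzu⟩ := hT.tm_surj ⟨hu.1, le_trans hu.2 zero_le_one⟩
    refine ⟨z, hz, ?_, ?_⟩
    · intro j hj
      cases j with
      | zero => simpa using hz
      | succ j => rw [Function.iterate_succ_apply, hzu]; exact hall j (by omega)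
    · rw [Function.iterate_succ_apply, hzu]; exact hun

/-- part 1 as standalone -/
lemma part1_aux {B : Set ℝ} (hB : B ⊆ Ioo (-1:ℝ) 0) {k : ℕ} (hk : 1 ≤ k) :
    DeltaPos T 0 ∩ {x | (k : ℕ∞) < hitTime T (DeltaPos T 0) x} ∩ (T^[k]) ⁻¹' B
      = shadowBranch hT.Tm hT.Tp k B := by
  ext x
  constructor
  · rintro ⟨⟨hA, hr⟩, hB'⟩
    exact hT.reverse hB hk hA
      (fun j h1 h2 => (hitTime_lt_iff T (DeltaPos T 0) x k).mp hr j h1 h2) hB'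
  · intro hx
    obtain ⟨hx01, hTeq, hkB, horb⟩ := hT.forward hB hk hx
    have hnotA : ∀ j, 1 ≤ j → j ≤ k → T^[j] x ∉ DeltaPos T 0 := by
      intro j h1 h2 hc
      have h3 := (horb j h1 h2).1.2
      have h4 := hc.2.1
      linarith
    refine ⟨⟨?_, ?_⟩, hkB⟩
    · have h1 := (horb 1 le_rfl hk).1
      rw [Function.iterate_one] at h1
      exact ⟨h1, ⟨hx01.1.le, hx01.2.le⟩⟩
    · exact (hitTime_lt_iff T (DeltaPos T 0) x k).mpr hnotA

/-- part 4 as standalone -/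
lemma bij_aux {B : Set ℝ} (hB : B ⊆ Ioo (-1:ℝ) 0) {k : ℕ} (hk : 1 ≤ k) :
    Set.BijOn (T^[k]) (shadowBranch hT.Tm hT.Tp k B) B := by
  refine ⟨fun x hx => (hT.forward hB hk hx).2.2.1, ?_, ?_⟩
  · intro x hx y hy hxy
    obtain ⟨hx01, -, -, horbx⟩ := hT.forward hB hk hx
    obtain ⟨hy01, -, -, horby⟩ := hT.forward hB hk hy
    rw [(horbx k hk le_rfl).2, (horby k hk le_rfl).2] at hxy
    have hxc := (shadowBranch_mem_iff _ _ _ _ _).mp hx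
    have hyc := (shadowBranch_mem_iff _ _ _ _ _).mp hy
    have hxall : ∀ i ≤ k - 1, hT.Tm^[i] (hT.Tp x) ∈ Icc (-1:ℝ) 0 := by
      intro i hi
      rcases lt_or_eq_of_le hi with h | h
      · exact hxc.2.1 i h
      · rw [h]
        have := hB hxc.2.2
        exact ⟨this.1.le, this.2.le⟩
    have hyall : ∀ i ≤ k - 1, hT.Tm^[i] (hT.Tp y) ∈ Icc (-1:ℝ) 0 := by
      intro i hi
      rcases lt_or_eq_of_le hi with h | h
      · exact hyc.2.1 i h
      · rw [h]
        have := hB hyc.2.2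
        exact ⟨this.1.le, this.2.le⟩
    have hTp : hT.Tp x = hT.Tp y := hT.tm_iter_injOn (k-1) hxall hyall hxy
    exact hT.hTp_mono.injOn ⟨hx01.1.le, hx01.2.le⟩ ⟨hy01.1.le, hy01.2.le⟩ hTp
  · intro b hb
    have hbIcc : b ∈ Icc (-1:ℝ) 0 := ⟨(hB hb).1.le, (hB hb).2.le⟩
    obtain ⟨u, hu, hall, hun⟩ := hT.tm_iter_surj (k-1) b hbIcc
    obtain ⟨x, hx01, hxTp⟩ := hT.tp_surj ⟨hu.1, le_trans hu.2 zero_le_one⟩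
    have hxmem : x ∈ shadowBranch hT.Tm hT.Tp k B := by
      rw [shadowBranch_mem_iff]
      refine ⟨hx01, fun j hj => ?_, ?_⟩
      · rw [hxTp]; exact hall j (by omega)
      · rw [hxTp, hun]; exact hb
    refine ⟨x, hxmem, ?_⟩
    rw [((hT.forward hB hk hxmem).2.2.2 k hk le_rfl).2, hxTp, hun]

end DoublyIntermittent

end Aux18c

set_option maxHeartbeats 1000000 in
/-- For a doubly intermittent map `T ∈ 𝔉`, `A = Δ₀^+`, and an interval
`B` with closure contained in `(-1,0)` and `T(B) ∩ B = ∅`: for every `k ≥ 1`,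
`A ∩ {r_A > k} ∩ T^{-k}(B) = B'(k) = T_+^{-1}(T_-^{-(k-1)}(B))`; the `B'(k)` are pairwise
disjoint intervals contained in `A`; `T^k` maps `B'(k)` bijectively onto `B`; the shadow
of `B` in `A` is `⋃_{k ≥ 1} B'(k)`.  Moreover, for `ζ ∈ (-1,0)`, the points
`α_k = T_+^{-1}(T_-^{-(k-1)}(ζ))` form a strictly decreasing sequence converging to `0`,
`α_k` being the unique point `α ∈ A` with `T^k(α) = ζ` and `T^j(α) ∉ A` for
`1 ≤ j ≤ k`. -/
theorem statement18 (T : ℝ → ℝ) (hT : DoublyIntermittent T)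
    (B : Set ℝ) (hBint : B.OrdConnected) (hBsub : closure B ⊆ Set.Ioo (-1 : ℝ) 0)
    (hBdisj : Disjoint (T '' B) B) :
    (∀ k : ℕ, 1 ≤ k →
      DeltaPos T 0 ∩ {x | (k : ℕ∞) < hitTime T (DeltaPos T 0) x} ∩ (T^[k]) ⁻¹' B
        = shadowBranch hT.Tm hT.Tp k B) ∧
    (∀ k k' : ℕ, 1 ≤ k → 1 ≤ k' → k ≠ k' →
      Disjoint (shadowBranch hT.Tm hT.Tp k B) (shadowBranch hT.Tm hT.Tp k' B)) ∧
    (∀ k : ℕ, 1 ≤ k → (shadowBranch hT.Tm hT.Tp k B).OrdConnected ∧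
      shadowBranch hT.Tm hT.Tp k B ⊆ DeltaPos T 0) ∧
    (∀ k : ℕ, 1 ≤ k → Set.BijOn (T^[k]) (shadowBranch hT.Tm hT.Tp k B) B) ∧
    (shadow T (DeltaPos T 0) B = ⋃ k : ℕ, shadowBranch hT.Tm hT.Tp (k + 1) B) ∧
    (∀ ζ ∈ Set.Ioo (-1 : ℝ) 0, ∀ k : ℕ, 1 ≤ k →
      ({α | α ∈ DeltaPos T 0 ∧ T^[k] α = ζ ∧
          ∀ j, 1 ≤ j → j ≤ k → T^[j] α ∉ DeltaPos T 0}
        = shadowBranch hT.Tm hT.Tp k {ζ}) ∧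
      (∃! α : ℝ, α ∈ DeltaPos T 0 ∧ T^[k] α = ζ ∧
          ∀ j, 1 ≤ j → j ≤ k → T^[j] α ∉ DeltaPos T 0)) ∧
    (∀ ζ ∈ Set.Ioo (-1 : ℝ) 0, ∀ α : ℕ → ℝ,
      (∀ k : ℕ, 1 ≤ k → α k ∈ DeltaPos T 0 ∧ T^[k] (α k) = ζ ∧
          ∀ j, 1 ≤ j → j ≤ k → T^[j] (α k) ∉ DeltaPos T 0) →
      StrictAntiOn α (Set.Ici 1) ∧ Tendsto α atTop (𝓝 0)) := by
  have hB : B ⊆ Set.Ioo (-1:ℝ) 0 := fun x hx => hBsub (subset_closure hx)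
  have part1 : ∀ k : ℕ, 1 ≤ k →
      DeltaPos T 0 ∩ {x | (k : ℕ∞) < hitTime T (DeltaPos T 0) x} ∩ (T^[k]) ⁻¹' B
        = shadowBranch hT.Tm hT.Tp k B := fun k hk => hT.part1_aux hB hk
  have hdisj : ∀ k k' : ℕ, 1 ≤ k → 1 ≤ k' → k < k' →
      ∀ x, x ∈ shadowBranch hT.Tm hT.Tp k B → x ∈ shadowBranch hT.Tm hT.Tp k' B → False := by
    intro k k' hk hk' hkk' x hx hx'
    obtain ⟨-, -, hkB, horb⟩ := hT.forward hB hk hx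
    obtain ⟨-, -, hk'B, horb'⟩ := hT.forward hB hk' hx'
    have hk1 : T^[k+1] x = hT.Tm (T^[k] x) := by
      rw [Function.iterate_succ_apply']
      exact hT.T_eq_tm ⟨(hB hkB).1.le, (hB hkB).2⟩
    have himg : T^[k+1] x ∈ T '' B := by
      rw [Function.iterate_succ_apply']
      exact Set.mem_image_of_mem T hkB
    have hlt : T^[k] x < T^[k+1] x := by
      rw [hk1]; exact hT.tm_gt ⟨(hB hkB).1, (hB hkB).2.le⟩
    have hmono : ∀ j, k+1 ≤ j → j ≤ k' → T^[k+1] x ≤ T^[j] x := by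
      intro j hj
      induction j, hj using Nat.le_induction with
      | base => intro _; exact le_rfl
      | succ j hj ih =>
        intro hjk
        have hprev := ih (by omega)
        have hjmem := (horb' j (by omega) (by omega)).1
        have hstep : T^[j] x < T^[j+1] x := by
          rw [Function.iterate_succ_apply', hT.T_eq_tm ⟨hjmem.1.le, hjmem.2⟩]
          exact hT.tm_gt ⟨hjmem.1, hjmem.2.le⟩
        exact le_trans hprev hstep.le
    have hmem : T^[k+1] x ∈ B :=
      hBint.out hkB hk'B ⟨hlt.le, hmono k' (by omega) le_rfl⟩
    exact Set.disjoint_left.mp hBdisj himg hmem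
  refine ⟨part1, ?_, ?_, ?_, ?_, ?_, ?_⟩
  · intro k k' hk hk' hne
    rcases Nat.lt_or_ge k k' with h | h
    · exact Set.disjoint_left.mpr (fun x hx hx' => (hdisj k k' hk hk' h x hx hx').elim)
    · have h' : k' < k := by omega
      exact (Set.disjoint_left.mpr (fun x hx hx' => (hdisj k' k hk' hk h' x hx hx').elim)).symm
  · intro k hk
    refine ⟨hT.shadowBranch_ordConnected hBint k, ?_⟩
    rw [← part1 k hk]
    exact fun x hx => hx.1.1
  · intro k hk
    exact hT.bij_aux hB hk
  · ext x
    simp only [shadow, Set.mem_iUnion]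
    constructor
    · rintro ⟨k, hk⟩
      cases k with
      | zero =>
        exfalso
        have hx01 : x ∈ Set.Icc (0:ℝ) 1 := hk.1.1.2
        have hxB : x ∈ B := by simpa using hk.2
        have h2 := (hB hxB).2
        linarith [hx01.1]
      | succ k =>
        exact ⟨k, by rw [← part1 (k+1) (by omega)]; exact hk⟩
    · rintro ⟨k, hk⟩
      exact ⟨k+1, by rw [part1 (k+1) (by omega)]; exact hk⟩
  · intro ζ hζ k hk
    have hsing : {ζ} ⊆ Set.Ioo (-1:ℝ) 0 := Set.singleton_subset_iff.mpr hζ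
    have heq : {α | α ∈ DeltaPos T 0 ∧ T^[k] α = ζ ∧
        ∀ j, 1 ≤ j → j ≤ k → T^[j] α ∉ DeltaPos T 0} = shadowBranch hT.Tm hT.Tp k {ζ} := by
      ext α
      constructor
      · rintro ⟨h1, h2, h3⟩
        exact hT.reverse hsing hk h1 h3 (by simp [h2])
      · intro hα
        obtain ⟨hx01, hTeq, hkB, horb⟩ := hT.forward hsing hk hα
        refine ⟨?_, by simpa using hkB, fun j h1 h2 hc => ?_⟩
        · have h1 := (horb 1 le_rfl hk).1
          rw [Function.iterate_one] at h1
          exact ⟨h1, ⟨hx01.1.le, hx01.2.le⟩⟩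
        · have h3 := (horb j h1 h2).1.2
          have h4 := hc.2.1
          linarith
    refine ⟨heq, ?_⟩
    obtain ⟨a, hamem, haeq⟩ := (hT.bij_aux hsing hk).2.2 (Set.mem_singleton ζ)
    have haP : a ∈ {α | α ∈ DeltaPos T 0 ∧ T^[k] α = ζ ∧
        ∀ j, 1 ≤ j → j ≤ k → T^[j] α ∉ DeltaPos T 0} := by rw [heq]; exact hamem
    refine ⟨a, haP, ?_⟩
    intro y hy
    have hymem : y ∈ shadowBranch hT.Tm hT.Tp k {ζ} :=
      heq ▸ (show y ∈ {α | α ∈ DeltaPos T 0 ∧ T^[k] α = ζ ∧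
        ∀ j, 1 ≤ j → j ≤ k → T^[j] α ∉ DeltaPos T 0} from hy)
    exact (hT.bij_aux hsing hk).2.1 hymem hamem (by rw [hy.2.1, haeq])
  · intro ζ hζ α hα
    have hsing : {ζ} ⊆ Set.Ioo (-1:ℝ) 0 := Set.singleton_subset_iff.mpr hζ
    have hmem : ∀ k, 1 ≤ k → α k ∈ shadowBranch hT.Tm hT.Tp k {ζ} := by
      intro k hk
      obtain ⟨h1, h2, h3⟩ := hα k hk
      exact hT.reverse hsing hk h1 h3 (by simp [h2])
    have hTpIoo : ∀ k, 1 ≤ k → hT.Tp (α k) ∈ Set.Ioo (-1:ℝ) 0 := by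
      intro k hk
      obtain ⟨hx01, hTeq, -, horb⟩ := hT.forward hsing hk (hmem k hk)
      rw [hTeq]
      have := (horb 1 le_rfl hk).1
      rwa [Function.iterate_one] at this
    have huniq : ∀ k, 1 ≤ k → ∀ x, x ∈ shadowBranch hT.Tm hT.Tp k {ζ} → x = α k := by
      intro k hk x hx
      have h1 : T^[k] x = ζ := by simpa using (hT.bij_aux hsing hk).1 hx
      have h2 : T^[k] (α k) = ζ := (hα k hk).2.1
      exact (hT.bij_aux hsing hk).2.1 hx (hmem k hk) (by rw [h1, h2])
    have hrec : ∀ k, 1 ≤ k → hT.Tm (hT.Tp (α (k+1))) = hT.Tp (α k) := by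
      intro k hk
      have hm1 := (shadowBranch_mem_iff hT.Tm hT.Tp (k+1) {ζ} (α (k+1))).mp
        (hmem (k+1) (by omega))
      have hfwd := hT.forward hsing (show 1 ≤ k+1 by omega) (hmem (k+1) (by omega))
      have h2 := hfwd.2.2.2 2 (by omega) (by omega)
      have hveq : hT.Tm (hT.Tp (α (k+1))) = T^[2] (α (k+1)) := by
        rw [h2.2]; norm_num
      have hv : hT.Tm (hT.Tp (α (k+1))) ∈ Set.Ioo (-1:ℝ) 0 := by
        rw [hveq]; exact h2.1
      obtain ⟨x, hx01, hxTp⟩ := hT.tp_surj ⟨hv.1.le, le_trans hv.2.le zero_le_one⟩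
      have hxmem : x ∈ shadowBranch hT.Tm hT.Tp k {ζ} := by
        rw [shadowBranch_mem_iff]
        refine ⟨hx01, fun j hj => ?_, ?_⟩
        · rw [hxTp, ← Function.iterate_succ_apply]
          exact hm1.2.1 (j+1) (by omega)
        · rw [hxTp, ← Function.iterate_succ_apply, Nat.succ_eq_add_one,
            show (k-1)+1 = k by omega]
          have hlast := hm1.2.2
          rwa [show k+1-1 = k by omega] at hlast
      have hxa := huniq k hk x hxmem
      rw [← hxa]
      exact hxTp.symm
    have hdec : ∀ k, 1 ≤ k → α (k+1) < α k := by
      intro k hk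
      have h1 := hTpIoo (k+1) (by omega)
      have h2 : hT.Tp (α (k+1)) < hT.Tp (α k) := by
        rw [← hrec k hk]
        exact hT.tm_gt ⟨h1.1, h1.2.le⟩
      have ha := (hT.forward hsing (show 1 ≤ k+1 by omega) (hmem (k+1) (by omega))).1
      have hb := (hT.forward hsing hk (hmem k hk)).1
      exact (hT.hTp_mono.lt_iff_lt ⟨ha.1.le, ha.2.le⟩ ⟨hb.1.le, hb.2.le⟩).mp h2
    constructor
    · intro a ha b hb hab
      have key : ∀ c, a + 1 ≤ c → α c < α a := by
        intro c hc
        induction c, hc using Nat.le_induction with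
        | base => exact hdec a ha
        | succ c hc ih => exact lt_trans (hdec c (by omega)) ih
      exact key b hab
    · have hIoo : ∀ n : ℕ, α (n+1) ∈ Set.Ioo (0:ℝ) 1 := fun n =>
        (hT.forward hsing (show 1 ≤ n+1 by omega) (hmem (n+1) (by omega))).1
      have hbdd : BddBelow (Set.range (fun n => α (n+1))) := by
        refine ⟨0, ?_⟩
        rintro y ⟨n, rfl⟩
        exact (hIoo n).1.le
      have hant : Antitone (fun n => α (n+1)) :=
        antitone_nat_of_succ_le (fun n => (hdec (n+1) (by omega)).le)
      have hlim := tendsto_atTop_ciInf hant hbdd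
      set L := ⨅ n : ℕ, α (n+1) with hLdef
      have hL0 : 0 ≤ L := le_ciInf (fun n => (hIoo n).1.le)
      have hL1 : L ≤ 1 := le_trans (ciInf_le hbdd 0) (hIoo 0).2.le
      have htendW : Tendsto (fun n => α (n+1)) atTop (𝓝[Set.Icc (0:ℝ) 1] L) :=
        tendsto_nhdsWithin_of_tendsto_nhds_of_eventually_within _ hlim
          (Filter.Eventually.of_forall (fun n => ⟨(hIoo n).1.le, (hIoo n).2.le⟩))
      have hTpcont : Tendsto (fun n => hT.Tp (α (n+1))) atTop (𝓝 (hT.Tp L)) :=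
        (hT.tp_contOn L ⟨hL0, hL1⟩).tendsto.comp htendW
      have hMIcc : hT.Tp L ∈ Set.Icc (-1:ℝ) 0 := by
        constructor
        · exact ge_of_tendsto' hTpcont (fun n => (hTpIoo (n+1) (by omega)).1.le)
        · exact le_of_tendsto' hTpcont (fun n => (hTpIoo (n+1) (by omega)).2.le)
      have hshift : Tendsto (fun n => hT.Tp (α (n+1+1))) atTop (𝓝 (hT.Tp L)) := by
        have := hTpcont.comp (tendsto_add_atTop_nat 1)
        exact this
      have hTm_lim : Tendsto (fun n => hT.Tm (hT.Tp (α (n+1+1)))) atTop (𝓝 (hT.Tp L)) := by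
        have heq2 : (fun n => hT.Tm (hT.Tp (α (n+1+1)))) = fun n => hT.Tp (α (n+1)) :=
          funext (fun n => hrec (n+1) (by omega))
        rw [heq2]; exact hTpcont
      have htendW2 : Tendsto (fun n => hT.Tp (α (n+1+1))) atTop
          (𝓝[Set.Icc (-1:ℝ) 0] (hT.Tp L)) :=
        tendsto_nhdsWithin_of_tendsto_nhds_of_eventually_within _ hshift
          (Filter.Eventually.of_forall (fun n =>
            ⟨(hTpIoo (n+1+1) (by omega)).1.le, (hTpIoo (n+1+1) (by omega)).2.le⟩))
      have hTm_lim2 : Tendsto (fun n => hT.Tm (hT.Tp (α (n+1+1)))) atTop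
          (𝓝 (hT.Tm (hT.Tp L))) :=
        (hT.tm_contOn (hT.Tp L) hMIcc).tendsto.comp htendW2
      have hfix : hT.Tm (hT.Tp L) = hT.Tp L := tendsto_nhds_unique hTm_lim2 hTm_lim
      have hM : hT.Tp L = -1 := (hT.hfixm _ hMIcc).mp hfix
      have hL : L = 0 := hT.hTp_mono.injOn ⟨hL0, hL1⟩ ⟨le_rfl, zero_le_one⟩
        (by rw [hM, hT.tp_zero])
      rw [hL] at hlim
      exact (Filter.tendsto_add_atTop_iff_nat 1).mp hlim
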